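/- Let f : X × [0,1] → [0,1] be such that y ↦ f(x,y) is non-decreasing for every x ∈ X, and fix points x_1,…,x_T ∈ X. For any fixed C ≥ 0 and any integer T ≥ 1, both y ↦ ψ_{T,+}^{-1}(y,C) and y ↦ ψ_{T,-}^{-1}(y,C) are non-decreasing on [0,1]. -/

import Mathlib

open MeasureTheory Set

/-- Extended-real logarithm: `log ⊤ = ⊤`, `log x = -∞` for `x ≤ 0` (in particular `log 0 = -∞`). -/
noncomputable def elog (x : EReal) : EReal :=
  if x = ⊤ then ⊤ else if x ≤ 0 then ⊥ else ((Real.log x.toReal : ℝ) : EReal)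

/-- Lower endpoint `-1/(1-μ)` of the betting interval, with the convention `1/0 = +∞`. -/
noncomputable def betLower (μ : ℝ) : EReal := if μ = 1 then ⊥ else ((-(1 - μ)⁻¹ : ℝ) : EReal)

/-- Upper endpoint `1/μ` of the betting interval, with the convention `1/0 = +∞`. -/
noncomputable def betUpper (μ : ℝ) : EReal := if μ = 0 then ⊤ else ((μ⁻¹ : ℝ) : EReal)

/-- The betting interval `A_μ = [-1/(1-μ), 1/μ]` (as a set of extended reals). -/
noncomputable def betSet (μ : ℝ) : Set EReal := Set.Icc (betLower μ) (betUpper μ)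

/-- `ψ_T(y, μ) = sup_{α ∈ A_μ} ∑_{t=1}^T log(1 + α (f(x_t, y) - μ))`, with the EReal
conventions (`0 * ±∞ = 0`, `log 0 = -∞`). -/
noncomputable def psiT {X : Type*} {T : ℕ} (f : X → ℝ → ℝ) (x : Fin T → X) (y μ : ℝ) : EReal :=
  ⨆ α ∈ betSet μ, ∑ t : Fin T, elog (1 + α * ((f (x t) y - μ : ℝ) : EReal))

/-- The upper inverse `ψ_{T,+}^{-1}(y, C) = sup {μ ∈ [0,1] : ψ_T(y, μ) ≤ C}`. -/
noncomputable def psiTInvPlus {X : Type*} {T : ℕ} (f : X → ℝ → ℝ) (x : Fin T → X)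
    (y : ℝ) (C : EReal) : ℝ :=
  sSup {μ : ℝ | μ ∈ Set.Icc (0 : ℝ) 1 ∧ psiT f x y μ ≤ C}

/-- The lower inverse `ψ_{T,-}^{-1}(y, C) = inf {μ ∈ [0,1] : ψ_T(y, μ) ≤ C}`. -/
noncomputable def psiTInvMinus {X : Type*} {T : ℕ} (f : X → ℝ → ℝ) (x : Fin T → X)
    (y : ℝ) (C : EReal) : ℝ :=
  sInf {μ : ℝ | μ ∈ Set.Icc (0 : ℝ) 1 ∧ psiT f x y μ ≤ C}

/-! ### Auxiliary lemmas -/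

lemma elog_mono : Monotone elog := by
  intro a b hab
  unfold elog
  by_cases hb : b = ⊤
  · simp [hb]
  · have ha : a ≠ ⊤ := fun h => hb (top_le_iff.mp (h ▸ hab))
    simp only [ha, hb, if_false]
    by_cases ha0 : a ≤ 0
    · simp [ha0]
    · have hb0 : ¬ b ≤ 0 := fun h => ha0 (hab.trans h)
      simp only [ha0, hb0, if_false, EReal.coe_le_coe_iff]
      have hab' : a ≠ ⊥ := fun h => ha0 (h ▸ bot_le)
      have hca : ((a.toReal : ℝ) : EReal) = a := EReal.coe_toReal ha hab'
      have hapos : 0 < a.toReal := by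
        rw [not_le] at ha0
        rw [← hca] at ha0
        exact_mod_cast ha0
      exact Real.log_le_log hapos (EReal.toReal_le_toReal hab hab' hb)

lemma elog_coe_le (s : ℝ) : elog (s : EReal) ≤ ((s - 1 : ℝ) : EReal) := by
  unfold elog
  by_cases h : ((s : ℝ) : EReal) ≤ 0
  · simp [h, EReal.coe_ne_top]
  · have hpos : 0 < s := by exact_mod_cast not_le.mp h
    simp only [EReal.coe_ne_top, if_false, h, EReal.toReal_coe, EReal.coe_le_coe_iff]
    linarith [Real.log_le_sub_one_of_pos hpos]

lemma elog_one : elog 1 = 0 := by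
  have : ((1 : ℝ) : EReal) = 1 := by norm_cast
  rw [← this]
  unfold elog
  rw [if_neg (EReal.coe_ne_top 1), if_neg (by norm_num)]
  simp

lemma mul_coe_mono {a : EReal} (ha : 0 ≤ a) {z z' : ℝ} (h : z ≤ z') :
    a * (z : EReal) ≤ a * (z' : EReal) := by
  induction a using EReal.rec with
  | bot => exact absurd ha (by simp)
  | coe r =>
    rw [← EReal.coe_mul, ← EReal.coe_mul, EReal.coe_le_coe_iff]
    exact mul_le_mul_of_nonneg_left h (by exact_mod_cast ha)
  | top =>
    rcases lt_trichotomy z 0 with hz | hz | hz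
    · rw [EReal.top_mul_coe_of_neg hz]; exact bot_le
    · subst hz
      rcases lt_trichotomy z' 0 with hz' | hz' | hz'
      · linarith
      · subst hz'; exact le_refl _
      · rw [EReal.top_mul_coe_of_pos hz']
        exact le_top
    · rw [EReal.top_mul_coe_of_pos hz, EReal.top_mul_coe_of_pos (lt_of_lt_of_le hz h)]

lemma mul_coe_anti {a : EReal} (ha : a ≤ 0) {z z' : ℝ} (h : z ≤ z') :
    a * (z' : EReal) ≤ a * (z : EReal) := by
  have h1 : 0 ≤ -a := by
    rw [← neg_zero]; exact EReal.neg_le_neg_iff.mpr ha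
  have h2 := mul_coe_mono h1 h
  rw [EReal.neg_mul, EReal.neg_mul] at h2
  exact EReal.neg_le_neg_iff.mp h2

lemma term_mono_pos {α : EReal} (hα : 0 ≤ α) {z z' : ℝ} (h : z ≤ z') :
    elog (1 + α * (z : EReal)) ≤ elog (1 + α * (z' : EReal)) :=
  elog_mono (add_le_add_right (mul_coe_mono hα h) 1)

lemma term_anti_neg {α : EReal} (hα : α ≤ 0) {z z' : ℝ} (h : z ≤ z') :
    elog (1 + α * (z' : EReal)) ≤ elog (1 + α * (z : EReal)) :=
  elog_mono (add_le_add_right (mul_coe_anti hα h) 1)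

lemma betLower_nonpos {μ : ℝ} (hμ : μ ≤ 1) : betLower μ ≤ 0 := by
  unfold betLower
  by_cases h : μ = 1
  · simp [h]
  · rw [if_neg h]
    have : 0 < 1 - μ := by cases lt_or_eq_of_le hμ with
      | inl h' => linarith
      | inr h' => exact absurd h' h
    have h2 : (0:ℝ) ≤ (1 - μ)⁻¹ := inv_nonneg.mpr this.le
    have : (-(1 - μ)⁻¹ : ℝ) ≤ 0 := by linarith
    exact_mod_cast this

lemma betUpper_nonneg {μ : ℝ} (hμ : 0 ≤ μ) : 0 ≤ betUpper μ := by
  unfold betUpper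
  by_cases h : μ = 0
  · simp [h]
  · rw [if_neg h]
    have : (0 : ℝ) ≤ μ⁻¹ := inv_nonneg.mpr hμ
    exact_mod_cast this

lemma betUpper_anti {μ μ' : ℝ} (h0 : 0 ≤ μ) (h : μ ≤ μ') : betUpper μ' ≤ betUpper μ := by
  unfold betUpper
  by_cases hμ : μ = 0
  · simp [hμ]
  · have hpos : 0 < μ := lt_of_le_of_ne h0 (Ne.symm hμ)
    have hpos' : 0 < μ' := lt_of_lt_of_le hpos h
    rw [if_neg hμ, if_neg (ne_of_gt hpos')]
    exact_mod_cast inv_anti₀ hpos h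

lemma betLower_anti {μ μ' : ℝ} (h1 : μ' ≤ 1) (h : μ ≤ μ') : betLower μ' ≤ betLower μ := by
  unfold betLower
  by_cases hμ' : μ' = 1
  · simp [hμ']
  · have hlt : μ' < 1 := lt_of_le_of_ne h1 hμ'
    have hlt2 : μ < 1 := lt_of_le_of_lt h hlt
    rw [if_neg hμ', if_neg (ne_of_lt hlt2)]
    have : -(1 - μ')⁻¹ ≤ -(1 - μ)⁻¹ := by
      have := inv_anti₀ (by linarith : (0:ℝ) < 1 - μ') (by linarith : 1 - μ' ≤ 1 - μ)
      linarith
    exact_mod_cast this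

lemma coe_fsum {ι : Type*} (s : Finset ι) (g : ι → ℝ) :
    ((∑ i ∈ s, g i : ℝ) : EReal) = ∑ i ∈ s, ((g i : ℝ) : EReal) := by
  classical
  induction s using Finset.induction_on with
  | empty => simp
  | @insert a s' ha ih =>
      rw [Finset.sum_insert ha, Finset.sum_insert ha, EReal.coe_add, ih]

/-! ### Decomposition of `psiT` into nonnegative and nonpositive bets -/

noncomputable def psiP {X : Type*} {T : ℕ} (f : X → ℝ → ℝ) (x : Fin T → X) (y μ : ℝ) : EReal :=
  ⨆ α ∈ Set.Icc (0 : EReal) (betUpper μ), ∑ t : Fin T, elog (1 + α * ((f (x t) y - μ : ℝ) : EReal))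

noncomputable def psiM {X : Type*} {T : ℕ} (f : X → ℝ → ℝ) (x : Fin T → X) (y μ : ℝ) : EReal :=
  ⨆ α ∈ Set.Icc (betLower μ) (0 : EReal), ∑ t : Fin T, elog (1 + α * ((f (x t) y - μ : ℝ) : EReal))

lemma psiT_eq_sup {X : Type*} {T : ℕ} (f : X → ℝ → ℝ) (x : Fin T → X) (y : ℝ) {μ : ℝ}
    (h0 : 0 ≤ μ) (h1 : μ ≤ 1) :
    psiT f x y μ = psiM f x y μ ⊔ psiP f x y μ := by
  unfold psiT psiM psiP betSet
  rw [← Set.Icc_union_Icc_eq_Icc (betLower_nonpos h1) (betUpper_nonneg h0), iSup_union]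

lemma psiM_le {X : Type*} {T : ℕ} (f : X → ℝ → ℝ) (x : Fin T → X) (y : ℝ) {μ : ℝ}
    (h0 : 0 ≤ μ) (h1 : μ ≤ 1) : psiM f x y μ ≤ psiT f x y μ := by
  rw [psiT_eq_sup f x y h0 h1]; exact le_sup_left

lemma psiP_le {X : Type*} {T : ℕ} (f : X → ℝ → ℝ) (x : Fin T → X) (y : ℝ) {μ : ℝ}
    (h0 : 0 ≤ μ) (h1 : μ ≤ 1) : psiP f x y μ ≤ psiT f x y μ := by
  rw [psiT_eq_sup f x y h0 h1]; exact le_sup_right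

/-- `psiP` is non-decreasing in `y` (through the values of `f`). -/
lemma psiP_mono_y {X : Type*} {T : ℕ} {f : X → ℝ → ℝ} {x : Fin T → X} {y y' μ : ℝ}
    (hf : ∀ t : Fin T, f (x t) y ≤ f (x t) y') :
    psiP f x y μ ≤ psiP f x y' μ := by
  unfold psiP
  refine iSup₂_mono fun α hα => Finset.sum_le_sum fun t _ => ?_
  exact term_mono_pos hα.1 (by linarith [hf t])

/-- `psiM` is non-increasing in `y`. -/
lemma psiM_anti_y {X : Type*} {T : ℕ} {f : X → ℝ → ℝ} {x : Fin T → X} {y y' μ : ℝ}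
    (hf : ∀ t : Fin T, f (x t) y ≤ f (x t) y') :
    psiM f x y' μ ≤ psiM f x y μ := by
  unfold psiM
  refine iSup₂_mono fun α hα => Finset.sum_le_sum fun t _ => ?_
  exact term_anti_neg hα.2 (by linarith [hf t])

/-- `psiP` is non-increasing in `μ`. -/
lemma psiP_anti_mu {X : Type*} {T : ℕ} {f : X → ℝ → ℝ} {x : Fin T → X} {y μ μ' : ℝ}
    (h0 : 0 ≤ μ) (h : μ ≤ μ') :
    psiP f x y μ' ≤ psiP f x y μ := by
  unfold psiP
  refine iSup₂_le fun α hα => ?_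
  refine le_iSup₂_of_le α ⟨hα.1, hα.2.trans (betUpper_anti h0 h)⟩ ?_
  exact Finset.sum_le_sum fun t _ => term_mono_pos hα.1 (by linarith)

/-- `psiM` is non-decreasing in `μ`. -/
lemma psiM_mono_mu {X : Type*} {T : ℕ} {f : X → ℝ → ℝ} {x : Fin T → X} {y μ μ' : ℝ}
    (h1 : μ' ≤ 1) (h : μ ≤ μ') :
    psiM f x y μ ≤ psiM f x y μ' := by
  unfold psiM
  refine iSup₂_le fun α hα => ?_
  refine le_iSup₂_of_le α ⟨(betLower_anti h1 h).trans hα.1, hα.2⟩ ?_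
  exact Finset.sum_le_sum fun t _ => term_anti_neg hα.2 (by linarith)

/-! ### The empirical mean is always in the sublevel set -/

lemma psiT_mean_le_zero {X : Type*} {T : ℕ} (hT : 1 ≤ T) (f : X → ℝ → ℝ) (x : Fin T → X)
    (y : ℝ) (hf0 : ∀ t : Fin T, 0 ≤ f (x t) y) (hf1 : ∀ t : Fin T, f (x t) y ≤ 1) :
    psiT f x y ((∑ t : Fin T, f (x t) y) / T) ≤ 0 := by
  set m : ℝ := (∑ t : Fin T, f (x t) y) / T with hm
  have hTpos : (0 : ℝ) < T := by exact_mod_cast hT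
  have hsum : ∑ t : Fin T, (f (x t) y - m) = 0 := by
    rw [Finset.sum_sub_distrib, Finset.sum_const, Finset.card_univ, Fintype.card_fin]
    rw [nsmul_eq_mul, hm, mul_div_cancel₀ _ hTpos.ne', sub_self]
  unfold psiT
  refine iSup₂_le fun α hα => ?_
  induction α using EReal.rec with
  | bot =>
    -- betLower m = ⊥, so m = 1, so all f values equal 1
    have hbl : betLower m = ⊥ := le_bot_iff.mp hα.1
    have hm1 : m = 1 := by
      by_contra hc
      rw [betLower, if_neg hc] at hbl
      exact EReal.coe_ne_bot _ hbl
    have hall : ∀ t : Fin T, f (x t) y - m = 0 := by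
      intro t
      have h1 : ∑ t : Fin T, (1 - f (x t) y) = 0 := by
        have : ∑ t : Fin T, (1 - f (x t) y) = ∑ t : Fin T, -(f (x t) y - m) := by
          refine Finset.sum_congr rfl fun t _ => by rw [hm1]; ring
        rw [this, Finset.sum_neg_distrib, hsum, neg_zero]
      have h2 := (Finset.sum_eq_zero_iff_of_nonneg
        (fun t _ => by linarith [hf1 t] : ∀ t ∈ Finset.univ, 0 ≤ 1 - f (x t) y)).mp h1
      have := h2 t (Finset.mem_univ t)
      rw [hm1]; linarith
    calc ∑ t : Fin T, elog (1 + (⊥ : EReal) * ((f (x t) y - m : ℝ) : EReal))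
        = ∑ t : Fin T, (0 : EReal) := Finset.sum_congr rfl fun t _ => by
          rw [hall t]; simp [elog_one]
      _ ≤ 0 := by simp
  | top =>
    have hbu : betUpper m = ⊤ := top_le_iff.mp hα.2
    have hm0 : m = 0 := by
      by_contra hc
      rw [betUpper, if_neg hc] at hbu
      exact EReal.coe_ne_top _ hbu
    have hall : ∀ t : Fin T, f (x t) y - m = 0 := by
      intro t
      have h1 : ∑ t : Fin T, f (x t) y = 0 := by
        have : ∑ t : Fin T, f (x t) y = ∑ t : Fin T, (f (x t) y - m) := by
          refine Finset.sum_congr rfl fun t _ => by rw [hm0]; ring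
        rw [this, hsum]
      have h2 := (Finset.sum_eq_zero_iff_of_nonneg
        (fun t _ => hf0 t : ∀ t ∈ Finset.univ, 0 ≤ f (x t) y)).mp h1
      have := h2 t (Finset.mem_univ t)
      rw [hm0]; linarith
    calc ∑ t : Fin T, elog (1 + (⊤ : EReal) * ((f (x t) y - m : ℝ) : EReal))
        = ∑ t : Fin T, (0 : EReal) := Finset.sum_congr rfl fun t _ => by
          rw [hall t]; simp [elog_one]
      _ ≤ 0 := by simp
  | coe a =>
    calc ∑ t : Fin T, elog (1 + (a : EReal) * ((f (x t) y - m : ℝ) : EReal))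
        ≤ ∑ t : Fin T, ((a * (f (x t) y - m) : ℝ) : EReal) := by
          refine Finset.sum_le_sum fun t _ => ?_
          have h1 : (1 : EReal) + (a : EReal) * ((f (x t) y - m : ℝ) : EReal)
              = ((1 + a * (f (x t) y - m) : ℝ) : EReal) := by
            rw [EReal.coe_add, EReal.coe_mul, EReal.coe_one]
          rw [h1]
          have := elog_coe_le (1 + a * (f (x t) y - m))
          simpa using this
      _ = ((∑ t : Fin T, a * (f (x t) y - m) : ℝ) : EReal) := (coe_fsum _ _).symm
      _ = ((a * ∑ t : Fin T, (f (x t) y - m) : ℝ) : EReal) := by rw [Finset.mul_sum]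
      _ = 0 := by rw [hsum, mul_zero]; rfl

lemma mean_mem_Icc {X : Type*} {T : ℕ} (hT : 1 ≤ T) (f : X → ℝ → ℝ) (x : Fin T → X)
    (y : ℝ) (hf0 : ∀ t : Fin T, 0 ≤ f (x t) y) (hf1 : ∀ t : Fin T, f (x t) y ≤ 1) :
    (∑ t : Fin T, f (x t) y) / T ∈ Set.Icc (0 : ℝ) 1 := by
  have hTpos : (0 : ℝ) < T := by exact_mod_cast hT
  constructor
  · apply div_nonneg _ hTpos.le
    exact Finset.sum_nonneg fun t _ => hf0 t
  · rw [div_le_one hTpos]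
    calc ∑ t : Fin T, f (x t) y ≤ ∑ _t : Fin T, (1 : ℝ) :=
          Finset.sum_le_sum fun t _ => hf1 t
      _ = T := by simp

/-- If `y ↦ f(x, y)` is non-decreasing on `[0,1]` for every `x`, then for any fixed `C ≥ 0`
both `y ↦ ψ_{T,+}^{-1}(y, C)` and `y ↦ ψ_{T,-}^{-1}(y, C)` are non-decreasing on `[0,1]`. -/
theorem psiTInv_mono_in_y {X : Type*} {T : ℕ} (hT : 1 ≤ T)
    (f : X → ℝ → ℝ) (hrange : ∀ x, ∀ y ∈ Set.Icc (0 : ℝ) 1, f x y ∈ Set.Icc (0 : ℝ) 1)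
    (hmono : ∀ x, MonotoneOn (f x) (Set.Icc (0 : ℝ) 1))
    (x : Fin T → X) (C : EReal) (hC : 0 ≤ C) :
    MonotoneOn (fun y => psiTInvPlus f x y C) (Set.Icc (0 : ℝ) 1) ∧
    MonotoneOn (fun y => psiTInvMinus f x y C) (Set.Icc (0 : ℝ) 1) := by
  -- the sublevel set
  set S : ℝ → Set ℝ := fun y => {μ : ℝ | μ ∈ Set.Icc (0 : ℝ) 1 ∧ psiT f x y μ ≤ C} with hS
  -- the empirical mean
  set m : ℝ → ℝ := fun y => (∑ t : Fin T, f (x t) y) / T with hmdef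
  have hf0 : ∀ y ∈ Set.Icc (0:ℝ) 1, ∀ t : Fin T, 0 ≤ f (x t) y :=
    fun y hy t => (hrange (x t) y hy).1
  have hf1 : ∀ y ∈ Set.Icc (0:ℝ) 1, ∀ t : Fin T, f (x t) y ≤ 1 :=
    fun y hy t => (hrange (x t) y hy).2
  have hmem : ∀ y ∈ Set.Icc (0:ℝ) 1, m y ∈ S y := by
    intro y hy
    refine ⟨mean_mem_Icc hT f x y (hf0 y hy) (hf1 y hy), ?_⟩
    exact (psiT_mean_le_zero hT f x y (hf0 y hy) (hf1 y hy)).trans hC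
  have hne : ∀ y ∈ Set.Icc (0:ℝ) 1, (S y).Nonempty := fun y hy => ⟨m y, hmem y hy⟩
  have hbddA : ∀ y, BddAbove (S y) := fun y => ⟨1, fun μ hμ => hμ.1.2⟩
  have hbddB : ∀ y, BddBelow (S y) := fun y => ⟨0, fun μ hμ => hμ.1.1⟩
  constructor
  · -- sup case
    intro y hy y' hy' hyy'
    simp only [psiTInvPlus]
    apply csSup_le (hne y hy)
    intro μ hμ
    by_cases hcase : m y' ≤ μ
    · -- μ itself works for y'
      have hμS' : μ ∈ S y' := by
        refine ⟨hμ.1, ?_⟩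
        have h0μ : (0:ℝ) ≤ μ := hμ.1.1
        have hμ1 : μ ≤ 1 := hμ.1.2
        rw [psiT_eq_sup f x y' h0μ hμ1]
        have hmy' := hmem y' hy'
        have hm0 : (0:ℝ) ≤ m y' := hmy'.1.1
        have hm1 : m y' ≤ 1 := hmy'.1.2
        refine sup_le ?_ ?_
        · -- psiM at y' ≤ psiM at y ≤ psiT y μ ≤ C
          have h1 : psiM f x y' μ ≤ psiM f x y μ :=
            psiM_anti_y fun t => hmono (x t) hy hy' hyy'
          exact h1.trans ((psiM_le f x y h0μ hμ1).trans hμ.2)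
        · -- psiP at μ ≤ psiP at m y' ≤ psiT y' (m y') ≤ C
          have h1 : psiP f x y' μ ≤ psiP f x y' (m y') := psiP_anti_mu hm0 hcase
          refine h1.trans ((psiP_le f x y' hm0 hm1).trans ?_)
          exact (psiT_mean_le_zero hT f x y' (hf0 y' hy') (hf1 y' hy')).trans hC
      exact le_csSup (hbddA y') hμS'
    · push_neg at hcase
      exact hcase.le.trans (le_csSup (hbddA y') (hmem y' hy'))
  · -- inf case
    intro y hy y' hy' hyy'
    simp only [psiTInvMinus]
    apply le_csInf (hne y' hy')
    intro μ hμ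
    by_cases hcase : m y ≤ μ
    · exact (csInf_le (hbddB y) (hmem y hy)).trans hcase
    · push_neg at hcase
      have hμS : μ ∈ S y := by
        refine ⟨hμ.1, ?_⟩
        have h0μ : (0:ℝ) ≤ μ := hμ.1.1
        have hμ1 : μ ≤ 1 := hμ.1.2
        rw [psiT_eq_sup f x y h0μ hμ1]
        have hmy := hmem y hy
        have hm0 : (0:ℝ) ≤ m y := hmy.1.1
        have hm1 : m y ≤ 1 := hmy.1.2
        refine sup_le ?_ ?_
        · have h1 : psiM f x y μ ≤ psiM f x y (m y) := psiM_mono_mu hm1 hcase.le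
          refine h1.trans ((psiM_le f x y hm0 hm1).trans ?_)
          exact (psiT_mean_le_zero hT f x y (hf0 y hy) (hf1 y hy)).trans hC
        · have h1 : psiP f x y μ ≤ psiP f x y' μ :=
            psiP_mono_y fun t => hmono (x t) hy hy' hyy'
          exact h1.trans ((psiP_le f x y' h0μ hμ1).trans hμ.2)
      exact csInf_le (hbddB y) hμS
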